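/- arXiv:2306.06509 — 5 statements merged into one kernel-verified Lean document; each statement's English description precedes it below -/
import Mathlib

section
/- Let H, A be real numbers, B a complex number, and define Q : ℂ² → ℝ by Q(v₁,v₂) = H(|v₁|⁴ + |v₂|⁴) + 4A|v₁|²|v₂|² + 2·Re(B·(v₁·conj(v₂))²). Then the supremum of Q over the unit sphere {(v₁,v₂) ∈ ℂ² : |v₁|² + |v₂|² = 1} equals max(H, (H + 2A + |B|)/2), and this supremum is attained. -/
/-- The supremum of the quartic form `Q` over the unit sphere of `ℂ²` equals
`max H ((H + 2A + |B|)/2)`, and it is attained. -/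
theorem cheung_sup (H A : ℝ) (B : ℂ) (Q : ℂ × ℂ → ℝ)
    (hQ : ∀ v : ℂ × ℂ, Q v =
      H * ((‖v.1‖) ^ 4 + (‖v.2‖) ^ 4)
        + 4 * A * (‖v.1‖) ^ 2 * (‖v.2‖) ^ 2
        + 2 * (B * (v.1 * (starRingEnd ℂ) v.2) ^ 2).re) :
    IsGreatest
      (Q '' {v : ℂ × ℂ | (‖v.1‖) ^ 2 + (‖v.2‖) ^ 2 = 1})
      (max H ((H + 2 * A + ‖B‖) / 2)) := by
  constructor
  · -- attained
    rcases le_or_gt ((H + 2 * A + ‖B‖) / 2) H with h | h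
    · rw [max_eq_left h]
      refine ⟨(1, 0), by simp, ?_⟩
      rw [hQ]; simp
    · rw [max_eq_right h.le]
      obtain ⟨c, hc⟩ : ∃ c : ℂ, c ^ 2 =
          if B = 0 then 1 else (starRingEnd ℂ) B / (‖B‖ : ℂ) :=
        IsAlgClosed.exists_pow_nat_eq _ zero_lt_two
      have habs : ‖c‖ = 1 := by
        have h2 : ‖c‖ ^ 2 = 1 := by
          rw [← norm_pow, hc]
          split_ifs with hB
          · simp
          · rw [norm_div, Complex.norm_conj, Complex.norm_real, Real.norm_eq_abs,
              abs_of_nonneg (norm_nonneg B),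
              div_self (norm_ne_zero_iff.mpr hB)]
        nlinarith [norm_nonneg c]
      have hBc : (B * (c ^ 2 / 4)).re = ‖B‖ / 4 := by
        rw [hc]
        split_ifs with hB
        · simp [hB]
        · have hb0 : ((‖B‖ : ℝ) : ℂ) ≠ 0 :=
            Complex.ofReal_ne_zero.2 (norm_ne_zero_iff.mpr hB)
          have key : B * (((starRingEnd ℂ) B / (‖B‖ : ℂ)) / 4)
              = ((‖B‖ / 4 : ℝ) : ℂ) := by
            rw [div_div, ← mul_div_assoc, Complex.mul_conj, Complex.normSq_eq_norm_sq]
            push_cast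
            rw [sq]
            field_simp
          rw [key, Complex.ofReal_re]
      have hsq2 : Real.sqrt 2 ^ 2 = 2 := Real.sq_sqrt (by norm_num)
      refine ⟨(c / Real.sqrt 2, 1 / Real.sqrt 2), ?_, ?_⟩
      · show ‖c / (Real.sqrt 2 : ℝ)‖ ^ 2
            + ‖(1:ℂ) / (Real.sqrt 2 : ℝ)‖ ^ 2 = 1
        rw [norm_div, norm_div, habs, Complex.norm_real, Real.norm_eq_abs, norm_one,
          abs_of_nonneg (Real.sqrt_nonneg 2)]
        simp only [div_pow, one_pow]
        rw [hsq2]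
        norm_num
      · rw [hQ]
        have h2m : ((Real.sqrt 2 : ℝ) : ℂ) * ((Real.sqrt 2 : ℝ) : ℂ) = 2 := by
          rw [← Complex.ofReal_mul, Real.mul_self_sqrt (by norm_num : (0:ℝ) ≤ 2)]
          norm_num
        have harg : ((c / (Real.sqrt 2 : ℝ)) * (starRingEnd ℂ) ((1 : ℂ) / (Real.sqrt 2 : ℝ))) ^ 2
            = c ^ 2 / 4 := by
          rw [map_div₀, map_one, Complex.conj_ofReal, div_mul_div_comm, mul_one, h2m,
            div_pow]
          norm_num
        show H * (‖c / (Real.sqrt 2 : ℝ)‖ ^ 4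
              + ‖(1:ℂ) / (Real.sqrt 2 : ℝ)‖ ^ 4)
            + 4 * A * ‖c / (Real.sqrt 2 : ℝ)‖ ^ 2
              * ‖(1:ℂ) / (Real.sqrt 2 : ℝ)‖ ^ 2
            + 2 * (B * ((c / (Real.sqrt 2 : ℝ)) * (starRingEnd ℂ)
                ((1:ℂ) / (Real.sqrt 2 : ℝ))) ^ 2).re
            = (H + 2 * A + ‖B‖) / 2
        rw [harg, hBc]
        rw [norm_div, norm_div, habs, Complex.norm_real, Real.norm_eq_abs, norm_one,
          abs_of_nonneg (Real.sqrt_nonneg 2)]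
        have h4 : Real.sqrt 2 ^ 4 = 4 := by nlinarith
        simp only [div_pow, one_pow]
        rw [hsq2, h4]
        ring
  · -- upper bound
    rintro x ⟨v, hv, rfl⟩
    rw [hQ]
    set a := ‖v.1‖ with ha
    set b := ‖v.2‖ with hb
    have hab : a ^ 2 + b ^ 2 = 1 := hv
    have key : (B * (v.1 * (starRingEnd ℂ) v.2) ^ 2).re ≤ ‖B‖ * (a ^ 2 * b ^ 2) := by
      calc (B * (v.1 * (starRingEnd ℂ) v.2) ^ 2).re
          ≤ ‖B * (v.1 * (starRingEnd ℂ) v.2) ^ 2‖ := Complex.re_le_norm _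
        _ = ‖B‖ * (a ^ 2 * b ^ 2) := by
            rw [norm_mul, norm_pow, norm_mul, Complex.norm_conj]
            ring
    set M := max H ((H + 2 * A + ‖B‖) / 2) with hM
    have h1 : H ≤ M := le_max_left _ _
    have h2 : (H + 2 * A + ‖B‖) / 2 ≤ M := le_max_right _ _
    have hst : 0 ≤ a ^ 2 * b ^ 2 := by positivity
    have hst4 : a ^ 2 * b ^ 2 ≤ 1 / 4 := by nlinarith [sq_nonneg (a ^ 2 - b ^ 2)]
    have hsum : a ^ 4 + b ^ 4 = 1 - 2 * (a ^ 2 * b ^ 2) := by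
      linear_combination (a ^ 2 + b ^ 2 + 1) * hab
    have hcase : H * (1 - 2 * (a ^ 2 * b ^ 2))
        + (4 * A + 2 * ‖B‖) * (a ^ 2 * b ^ 2) ≤ M := by
      rcases le_total (4 * A + 2 * ‖B‖ - 2 * H) 0 with hco | hco
      · nlinarith [mul_nonneg hst (neg_nonneg.2 hco)]
      · nlinarith [mul_nonneg (by linarith : (0:ℝ) ≤ 1 / 4 - a ^ 2 * b ^ 2) hco]
    rw [hsum]
    nlinarith [key, hcase]
end

section
/- Let H, A be real numbers, B a complex number, and define Q : ℂ² → ℝ by Q(v₁,v₂) = H(|v₁|⁴ + |v₂|⁴) + 4A|v₁|²|v₂|² + 2·Re(B·(v₁·conj(v₂))²). Then Q(v₁,v₂) < 0 for every (v₁,v₂) ∈ ℂ² with |v₁|² + |v₂|² = 1 if and only if H < 0 and H + (1/2)(2A − H + |B|) < 0. -/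
/-- There is a unit complex number `w` with `(B * w^2).re = |B|`. -/
lemma exists_unit_sq (B : ℂ) : ∃ w : ℂ, ‖w‖ = 1 ∧ (B * w ^ 2).re = ‖B‖ := by
  by_cases hB : B = 0
  · exact ⟨1, by simp, by simp [hB]⟩
  · set u : ℂ := (starRingEnd ℂ) B / (‖B‖ : ℂ) with hu
    have habsB : (‖B‖ : ℝ) ≠ 0 := by
      simpa using (norm_ne_zero_iff.mpr hB)
    have hune : u ≠ 0 := by
      simp [hu, div_eq_zero_iff, hB, habsB, Complex.ofReal_eq_zero]
    refine ⟨u ^ (((2 : ℕ) : ℂ)⁻¹), ?_, ?_⟩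
    · have hsq : (u ^ (((2 : ℕ) : ℂ)⁻¹)) ^ (2 : ℕ) = u :=
        Complex.cpow_nat_inv_pow u (by norm_num)
    -- |u| = 1
      have habsu : ‖u‖ = 1 := by
        rw [hu]
        rw [norm_div]
        simp [Complex.norm_conj, habsB]
      have h2 : (‖u ^ (((2 : ℕ) : ℂ)⁻¹)‖) ^ (2 : ℕ) = 1 := by
        rw [← norm_pow, hsq, habsu]
      have hnn := norm_nonneg (u ^ (((2 : ℕ) : ℂ)⁻¹))
      have hfac : (‖u ^ (((2 : ℕ) : ℂ)⁻¹)‖ - 1) *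
          (‖u ^ (((2 : ℕ) : ℂ)⁻¹)‖ + 1) = 0 := by nlinarith
      rcases mul_eq_zero.mp hfac with h | h
      · linarith
      · linarith
    · have hsq : (u ^ (((2 : ℕ) : ℂ)⁻¹)) ^ (2 : ℕ) = u :=
        Complex.cpow_nat_inv_pow u (by norm_num)
      have : B * (u ^ (((2 : ℕ) : ℂ)⁻¹)) ^ 2 = (‖B‖ : ℂ) := by
        rw [hsq, hu]
        rw [mul_div_assoc']
        rw [Complex.mul_conj]
        rw [Complex.normSq_eq_norm_sq]
        rw [div_eq_iff (by exact_mod_cast habsB)]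
        push_cast
        ring
      rw [this]
      simp

/-- Cheung's negativity criterion (3.4): the quartic form `Q` is negative on the
whole unit sphere of `ℂ²` iff `H < 0` and `H + (1/2)(2A − H + |B|) < 0`. -/
theorem cheung_negativity_criterion (H A : ℝ) (B : ℂ) (Q : ℂ × ℂ → ℝ)
    (hQ : ∀ v : ℂ × ℂ, Q v =
      H * ((‖v.1‖) ^ 4 + (‖v.2‖) ^ 4)
        + 4 * A * (‖v.1‖) ^ 2 * (‖v.2‖) ^ 2
        + 2 * (B * (v.1 * (starRingEnd ℂ) v.2) ^ 2).re) :
    (∀ v : ℂ × ℂ, (‖v.1‖) ^ 2 + (‖v.2‖) ^ 2 = 1 → Q v < 0)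
      ↔ H < 0 ∧ H + (1 / 2) * (2 * A - H + ‖B‖) < 0 := by
  constructor
  · intro hall
    have h1 : Q (1, 0) < 0 := hall (1, 0) (by simp)
    have hH : H < 0 := by
      have := hQ (1, 0)
      simp at this
      linarith [h1, this ▸ h1]
    refine ⟨hH, ?_⟩
    obtain ⟨w, hw1, hw2⟩ := exists_unit_sq B
    set s : ℝ := Real.sqrt 2 with hs
    have hs0 : (0:ℝ) < s := Real.sqrt_pos.mpr (by norm_num)
    have hs2 : s ^ 2 = 2 := Real.sq_sqrt (by norm_num)
    set v : ℂ × ℂ := (w / (s : ℂ), 1 / (s : ℂ)) with hv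
    have hv1 : ‖v.1‖ ^ 2 = 1 / 2 := by
      simp only [hv, norm_div, Complex.norm_real, Real.norm_eq_abs, abs_of_pos hs0, hw1]
      rw [div_pow, hs2]; norm_num
    have hv2 : ‖v.2‖ ^ 2 = 1 / 2 := by
      simp only [hv, norm_div, Complex.norm_real, Real.norm_eq_abs, abs_of_pos hs0, norm_one]
      rw [div_pow, hs2]; norm_num
    have hsphere : ‖v.1‖ ^ 2 + ‖v.2‖ ^ 2 = 1 := by
      rw [hv1, hv2]; norm_num
    have hre : (B * (v.1 * (starRingEnd ℂ) v.2) ^ 2).re = ‖B‖ / 4 := by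
      have hconj : (starRingEnd ℂ) v.2 = 1 / (s : ℂ) := by
        show (starRingEnd ℂ) (1 / (s:ℂ)) = 1 / (s:ℂ)
        rw [map_div₀, map_one, Complex.conj_ofReal]
      have hsC : ((s : ℂ)) ^ 2 = 2 := by
        rw [← Complex.ofReal_pow, hs2]; norm_num
      have : v.1 * (starRingEnd ℂ) v.2 = w / 2 := by
        rw [hconj]
        show w / (s:ℂ) * (1 / (s:ℂ)) = w / 2
        rw [div_mul_div_comm, mul_one, ← sq, hsC]
      rw [this]
      have : B * (w / 2) ^ 2 = (B * w ^ 2) / ((4:ℝ):ℂ) := by push_cast; ring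
      rw [this, Complex.div_ofReal_re, hw2]
    have hv14 : ‖v.1‖ ^ 4 = 1 / 4 := by
      have : ‖v.1‖ ^ 4 = (‖v.1‖ ^ 2) ^ 2 := by ring
      rw [this, hv1]; norm_num
    have hv24 : ‖v.2‖ ^ 4 = 1 / 4 := by
      have : ‖v.2‖ ^ 4 = (‖v.2‖ ^ 2) ^ 2 := by ring
      rw [this, hv2]; norm_num
    have hQv := hQ v
    rw [hv1, hv2, hv14, hv24, hre] at hQv
    have := hall v hsphere
    rw [hQv] at this
    nlinarith [this]
  · rintro ⟨hH, hcrit⟩ v hv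
    rw [hQ v]
    set a : ℝ := ‖v.1‖ with ha
    set b : ℝ := ‖v.2‖ with hb
    have ha0 : 0 ≤ a := norm_nonneg _
    have hb0 : 0 ≤ b := norm_nonneg _
    have hre : (B * (v.1 * (starRingEnd ℂ) v.2) ^ 2).re ≤ ‖B‖ * (a ^ 2 * b ^ 2) := by
      calc (B * (v.1 * (starRingEnd ℂ) v.2) ^ 2).re
          ≤ ‖B * (v.1 * (starRingEnd ℂ) v.2) ^ 2‖ := Complex.re_le_norm _
        _ = ‖B‖ * (a ^ 2 * b ^ 2) := by
            rw [norm_mul, norm_pow, norm_mul, Complex.norm_conj]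
            ring
    set t : ℝ := a ^ 2 * b ^ 2 with ht
    have htn : 0 ≤ t := by positivity
    have ht4 : t ≤ 1 / 4 := by nlinarith [sq_nonneg (a ^ 2 - b ^ 2)]
    have habB : 0 ≤ ‖B‖ := norm_nonneg _
    have hsum : a ^ 4 + b ^ 4 = 1 - 2 * t := by nlinarith [hv]
    rw [hsum]
    -- goal : H * (1 - 2t) + 4A t' + 2 Re < 0  (t' = a²b² = t)
    have key : H * (1 - 2 * t) + 4 * A * t + 2 * (‖B‖ * t) < 0 := by
      rcases eq_or_lt_of_le htn with h0 | h0
      · rw [← h0]; simpa using hH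
      · nlinarith [mul_pos h0 (show (0:ℝ) < -(H + (1/2) * (2*A - H + ‖B‖)) by linarith),
          mul_nonneg (show (0:ℝ) ≤ 1/4 - t by linarith) (show (0:ℝ) ≤ -H by linarith)]
    nlinarith [hre, key]
end

section
/- Let H, A be real numbers and B a complex number such that H + A < 0 and (1/2)(H² + 2A² + |B|²) < (H + A)². Then H < 0 and H + 2A + |B| < 0; consequently the quartic form Q(v₁,v₂) = H(|v₁|⁴ + |v₂|⁴) + 4A|v₁|²|v₂|² + 2·Re(B·(v₁·conj(v₂))²) is strictly negative at every (v₁,v₂) ∈ ℂ² with |v₁|² + |v₂|² = 1. -/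
/-- Algebraic core of Cheung's Lemma 3.9: if `H + A < 0` and
`(1/2)(H² + 2A² + |B|²) < (H + A)²`, then `H < 0`, `H + 2A + |B| < 0`, and the
quartic form `Q` is strictly negative on the unit sphere of `ℂ²`. -/
theorem cheung_lemma_3_9 (H A : ℝ) (B : ℂ)
    (h1 : H + A < 0)
    (h2 : (1 / 2) * (H ^ 2 + 2 * A ^ 2 + (‖B‖) ^ 2) < (H + A) ^ 2) :
    H < 0 ∧ H + 2 * A + ‖B‖ < 0 ∧
      ∀ v : ℂ × ℂ, (‖v.1‖) ^ 2 + (‖v.2‖) ^ 2 = 1 →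
        H * ((‖v.1‖) ^ 4 + (‖v.2‖) ^ 4)
          + 4 * A * (‖v.1‖) ^ 2 * (‖v.2‖) ^ 2
          + 2 * (B * (v.1 * (starRingEnd ℂ) v.2) ^ 2).re < 0 := by
  set b := ‖B‖ with hbdef
  have hb0 : 0 ≤ b := norm_nonneg B
  -- h2 means b^2 < H^2 + 4*H*A
  have h2' : b ^ 2 < H ^ 2 + 4 * H * A := by nlinarith [h2]
  have hH : H < 0 := by
    by_contra hc
    push_neg at hc
    nlinarith [sq_nonneg b, mul_nonneg hc (show (0:ℝ) ≤ -(H + 4 * A) by linarith)]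
  have hHb : H + 2 * A + b < 0 := by
    rcases le_or_gt 0 (H + 2 * A) with hc | hc
    · exfalso
      nlinarith [sq_nonneg b, mul_pos (show (0:ℝ) < -H by linarith)
        (show (0:ℝ) < H + 4 * A by linarith)]
    · nlinarith [sq_nonneg A, mul_nonneg hb0 hb0]
  refine ⟨hH, hHb, fun v hv => ?_⟩
  set x := ‖v.1‖ with hx
  set y := ‖v.2‖ with hy
  have hre : (B * (v.1 * (starRingEnd ℂ) v.2) ^ 2).re ≤ b * (x ^ 2 * y ^ 2) := by
    calc (B * (v.1 * (starRingEnd ℂ) v.2) ^ 2).re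
        ≤ ‖B * (v.1 * (starRingEnd ℂ) v.2) ^ 2‖ := Complex.re_le_norm _
      _ = b * (‖v.1 * (starRingEnd ℂ) v.2‖) ^ 2 := by
          rw [norm_mul, norm_pow]
      _ = b * (x ^ 2 * y ^ 2) := by
          rw [norm_mul, Complex.norm_conj]; ring
  have hx0 : 0 ≤ x ^ 2 := sq_nonneg x
  have hy0 : 0 ≤ y ^ 2 := sq_nonneg y
  rcases eq_or_lt_of_le (mul_nonneg hx0 hy0) with h0 | h0
  · -- x^2 * y^2 = 0
    have hsq : (x ^ 2 + y ^ 2) ^ 2 = 1 := by rw [hv]; norm_num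
    nlinarith [hre, hH, h0.symm, hsq]
  · nlinarith [hre, mul_pos (show (0:ℝ) < -(H + 2 * A + b) by linarith) h0,
      mul_nonneg (show (0:ℝ) ≤ -H by linarith) (sq_nonneg (x ^ 2 - y ^ 2)), hv]
end

section
/- Let H, A be real numbers and B a complex number, and suppose the quartic form Q(v₁,v₂) = H(|v₁|⁴ + |v₂|⁴) + 4A|v₁|²|v₂|² + 2·Re(B·(v₁·conj(v₂))²) is strictly negative at every (v₁,v₂) ∈ ℂ² with |v₁|² + |v₂|² = 1. Then (1/2)(H² + 2A² + |B|²) < 3(H + A)². -/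
/-- Pointwise inequality behind Theorem 1.6 (Cheung's Theorem 3.12): if the
quartic form `Q` is strictly negative on the unit sphere of `ℂ²`, then
`(1/2)(H² + 2A² + |B|²) < 3(H + A)²`. -/
theorem cheung_pointwise_chern (H A : ℝ) (B : ℂ)
    (hneg : ∀ v : ℂ × ℂ, (‖v.1‖) ^ 2 + (‖v.2‖) ^ 2 = 1 →
      H * ((‖v.1‖) ^ 4 + (‖v.2‖) ^ 4)
        + 4 * A * (‖v.1‖) ^ 2 * (‖v.2‖) ^ 2
        + 2 * (B * (v.1 * (starRingEnd ℂ) v.2) ^ 2).re < 0) :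
    (1 / 2) * (H ^ 2 + 2 * A ^ 2 + (‖B‖) ^ 2) < 3 * (H + A) ^ 2 := by
  set c := ‖B‖ with hc
  have hc0 : 0 ≤ c := norm_nonneg B
  -- H < 0
  have hH : H < 0 := by
    have := hneg (1, 0) (by simp)
    simpa using this
  -- choose a unit u with (B * u^2).re = c
  obtain ⟨u, hu1, hu2⟩ : ∃ u : ℂ, ‖u‖ = 1 ∧ (B * u ^ 2).re = c := by
    by_cases hB : B = 0
    · exact ⟨1, by simp, by simp [hB, hc]⟩
    · have hcne : (c : ℂ) ≠ 0 := by
        simpa [hc] using Complex.ofReal_ne_zero.mpr ((norm_ne_zero_iff.mpr hB))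
      have hzne : (starRingEnd ℂ) B / (c : ℂ) ≠ 0 := by
        refine div_ne_zero ?_ hcne
        simpa using hB
      refine ⟨((starRingEnd ℂ) B / (c : ℂ)) ^ ((2 : ℕ) : ℂ)⁻¹, ?_, ?_⟩
      · have hpow : (((starRingEnd ℂ) B / (c : ℂ)) ^ ((2 : ℕ) : ℂ)⁻¹) ^ (2 : ℕ)
            = (starRingEnd ℂ) B / (c : ℂ) :=
          Complex.cpow_nat_inv_pow _ two_ne_zero
        have habs : ‖(starRingEnd ℂ) B / (c : ℂ)‖ = 1 := by
          rw [norm_div]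
          simp [hc, hB]
        have h2 : (‖((starRingEnd ℂ) B / (c : ℂ)) ^ ((2 : ℕ) : ℂ)⁻¹‖) ^ (2 : ℕ) = 1 := by
          rw [← norm_pow, hpow, habs]
        nlinarith [norm_nonneg (((starRingEnd ℂ) B / (c : ℂ)) ^ ((2 : ℕ) : ℂ)⁻¹),
          sq_nonneg (‖((starRingEnd ℂ) B / (c : ℂ)) ^ ((2 : ℕ) : ℂ)⁻¹‖ - 1),
          sq_nonneg (‖((starRingEnd ℂ) B / (c : ℂ)) ^ ((2 : ℕ) : ℂ)⁻¹‖ + 1)]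
      · have hpow : (((starRingEnd ℂ) B / (c : ℂ)) ^ ((2 : ℕ) : ℂ)⁻¹) ^ (2 : ℕ)
            = (starRingEnd ℂ) B / (c : ℂ) :=
          Complex.cpow_nat_inv_pow _ two_ne_zero
        rw [hpow]
        have : B * ((starRingEnd ℂ) B / (c : ℂ)) = (c : ℂ) := by
          rw [mul_div_assoc', Complex.mul_conj]
          rw [div_eq_iff hcne]
          push_cast [Complex.normSq_eq_norm_sq]
          ring
        rw [this]
        simp
  -- plug in v = (u/√2, 1/√2)
  have hs2 : Real.sqrt 2 ≠ 0 := by positivity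
  have key : H / 2 + A + c / 2 < 0 := by
    have h := hneg ((Real.sqrt 2 : ℂ)⁻¹ * u, (Real.sqrt 2 : ℂ)⁻¹) ?_
    · have habs1 : ‖(Real.sqrt 2 : ℂ)⁻¹ * u‖ ^ 2 = 1 / 2 := by
        rw [norm_mul, norm_inv, Complex.norm_real, Real.norm_of_nonneg (Real.sqrt_nonneg 2), hu1]
        rw [mul_one, inv_pow, Real.sq_sqrt (by norm_num : (2:ℝ) ≥ 0)]
        norm_num
      have habs2 : ‖(Real.sqrt 2 : ℂ)⁻¹‖ ^ 2 = 1 / 2 := by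
        rw [norm_inv, Complex.norm_real, Real.norm_of_nonneg (Real.sqrt_nonneg 2)]
        rw [inv_pow, Real.sq_sqrt (by norm_num : (2:ℝ) ≥ 0)]
        norm_num
      have habs14 : ‖(Real.sqrt 2 : ℂ)⁻¹ * u‖ ^ 4 = 1 / 4 := by
        have : ‖(Real.sqrt 2 : ℂ)⁻¹ * u‖ ^ 4
            = (‖(Real.sqrt 2 : ℂ)⁻¹ * u‖ ^ 2) ^ 2 := by ring
        rw [this, habs1]; norm_num
      have habs24 : ‖(Real.sqrt 2 : ℂ)⁻¹‖ ^ 4 = 1 / 4 := by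
        have : ‖(Real.sqrt 2 : ℂ)⁻¹‖ ^ 4
            = (‖(Real.sqrt 2 : ℂ)⁻¹‖ ^ 2) ^ 2 := by ring
        rw [this, habs2]; norm_num
      have hcross : ((Real.sqrt 2 : ℂ)⁻¹ * u * (starRingEnd ℂ) ((Real.sqrt 2 : ℂ)⁻¹)) ^ 2
          = u ^ 2 / 4 := by
        have hconj : (starRingEnd ℂ) ((Real.sqrt 2 : ℂ)⁻¹) = (Real.sqrt 2 : ℂ)⁻¹ := by
          simp
        rw [hconj]
        have hs : ((Real.sqrt 2 : ℝ) : ℂ) ^ 2 = 2 := by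
          norm_cast
          exact Real.sq_sqrt (by norm_num)
        have hexp : ((Real.sqrt 2 : ℂ)⁻¹ * u * (Real.sqrt 2 : ℂ)⁻¹) ^ 2
            = u ^ 2 * ((((Real.sqrt 2 : ℝ) : ℂ)) ^ 2)⁻¹ * ((((Real.sqrt 2 : ℝ) : ℂ)) ^ 2)⁻¹ := by
          ring
        rw [hexp, hs]
        ring
      rw [habs14, habs24, habs1, habs2, hcross] at h
      have hre : (B * (u ^ 2 / 4)).re = c / 4 := by
        have : B * (u ^ 2 / 4) = B * u ^ 2 / 4 := by ring
        rw [this]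
        rw [show B * u ^ 2 / 4 = (4:ℂ)⁻¹ * (B * u ^ 2) by ring]
        have h4 : (4 : ℂ)⁻¹ = (((4:ℝ)⁻¹ : ℝ) : ℂ) := by norm_num
        rw [h4, Complex.re_ofReal_mul, hu2]
        ring
      rw [hre] at h
      linarith
    · rw [show ‖(Real.sqrt 2 : ℂ)⁻¹ * u‖ ^ 2
          = (‖(Real.sqrt 2 : ℂ)⁻¹‖) ^ 2 * (‖u‖) ^ 2 by
            rw [norm_mul]; ring, hu1]
      rw [norm_inv, Complex.norm_real, Real.norm_of_nonneg (Real.sqrt_nonneg 2)]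
      rw [inv_pow, Real.sq_sqrt (by norm_num : (0:ℝ) ≤ 2)]
      norm_num
  -- conclude
  have hc2 : c ^ 2 < (H + 2 * A) ^ 2 := by nlinarith
  nlinarith [mul_pos (neg_pos.mpr hH) (by linarith : (0:ℝ) < -(H + 2 * A))]
end

section
/- Let H, A be real numbers and B a complex number with H < 0 and H + 2A + |B| < 0. Then (1/2)(H² + 2A² + |B|²) < 3(H + A)². -/
/-- Purely algebraic form of the pointwise inequality behind Theorem 1.6: if
`H < 0` and `H + 2A + |B| < 0`, then `(1/2)(H² + 2A² + |B|²) < 3(H + A)²`. -/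
theorem cheung_algebraic_inequality (H A : ℝ) (B : ℂ)
    (h1 : H < 0) (h2 : H + 2 * A + ‖B‖ < 0) :
    (1 / 2) * (H ^ 2 + 2 * A ^ 2 + ‖B‖ ^ 2) < 3 * (H + A) ^ 2 := by
  have hb : (0:ℝ) ≤ ‖B‖ := norm_nonneg B
  nlinarith [sq_nonneg (H + A), sq_nonneg (H - A), sq_nonneg (‖B‖), sq_nonneg (H + 2*A + ‖B‖), mul_pos (neg_pos.2 h1) (neg_pos.2 h2), sq_nonneg (‖B‖ - A), sq_nonneg (‖B‖ + A), mul_nonneg hb (neg_pos.2 h2).le]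
end
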